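/- arXiv:1511.04679 — 2 statements merged into one kernel-verified Lean document; each statement's English description precedes it below -/
import Mathlib

section
/- Every torsion-free abelian group is orderable: there exists a linear order on it compatible with addition. -/
theorem stmt3 {A : Type*} [AddCommGroup A]
    (htf : ∀ (n : ℕ) (a : A), 1 ≤ n → n • a = 0 → a = 0) :
    ∃ le : A → A → Prop, IsLinearOrder A le ∧
      ∀ a b c : A, le a b → le (a + c) (b + c) := by
  classical
  have hsmul : ∀ (n : ℤ) (a : A), n ≠ 0 → n • a = 0 → a = 0 := by
    intro n a hn h
    rcases lt_or_gt_of_ne hn with h' | h'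
    · refine htf (-n).toNat a (by omega) ?_
      rw [← natCast_zsmul, Int.toNat_of_nonneg (by omega : (0:ℤ) ≤ -n), neg_smul, h, neg_zero]
    · refine htf n.toNat a (by omega) ?_
      rw [← natCast_zsmul, Int.toNat_of_nonneg h'.le]; exact h
  set K := FractionRing ℤ
  set V := LocalizedModule (nonZeroDivisors ℤ) A
  let g : A →ₗ[ℤ] V := LocalizedModule.mkLinearMap (nonZeroDivisors ℤ) A
  have hg : Function.Injective g := by
    intro a b hab
    have h : LocalizedModule.mk a 1 = LocalizedModule.mk b 1 := hab
    rw [LocalizedModule.mk_eq] at h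
    obtain ⟨u, hu⟩ := h
    simp only [one_smul] at hu
    have h0 : (u : ℤ) • (a - b) = 0 := by
      rw [smul_sub, ← Submonoid.smul_def, ← Submonoid.smul_def, hu, sub_self]
    exact sub_eq_zero.mp (hsmul u (a - b) (nonZeroDivisors.coe_ne_zero u) h0)
  -- V is a K-vector space
  let bV := Module.Basis.ofVectorSpace K V
  set ι := Module.Basis.ofVectorSpaceIndex K V
  letI : LinearOrder ι := linearOrderOfSTO WellOrderingRel
  -- ring iso K ≃ ℚ
  let e : K ≃+* ℚ := (FractionRing.algEquiv ℤ ℚ).toRingEquiv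
  let f : A → Lex (ι →₀ ℚ) := fun a => toLex (Finsupp.mapRange e e.map_zero (bV.repr (g a)))
  have hf : Function.Injective f := by
    intro a b hab
    apply hg
    apply bV.repr.injective
    have := toLex.injective hab
    ext i
    have := DFunLike.congr_fun this i
    simpa using e.injective this
  have hadd : ∀ a b : A, f (a + b) = f a + f b := by
    intro a b
    simp only [f, map_add]
    rw [Finsupp.mapRange_add e.map_add]; rfl
  refine ⟨fun a b => f a ≤ f b,
    { refl := fun a => le_refl _
      trans := fun a b c => le_trans
      antisymm := fun a b h1 h2 => hf (le_antisymm h1 h2)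
      total := fun a b => le_total _ _ }, ?_⟩
  intro a b c h
  rw [hadd, hadd]
  exact add_le_add_left h (f c)
end

section
/- If Φ : (ℕ → ℕ) → (ℕ → ℕ) maps every infinite binary tree to a path through it, then Φ is discontinuous (with respect to the product topology on ℕ → ℕ, identifying trees with their characteristic functions): there exist a tree T and a sequence of trees Tₖ converging to T with Φ(Tₖ) not converging to Φ(T). -/
def IsTree (T : Set (List Bool)) : Prop :=
  ∀ σ ∈ T, ∀ τ : List Bool, τ <+: σ → τ ∈ T

def InfTree (T : Set (List Bool)) : Prop :=
  IsTree T ∧ ∀ n : ℕ, ∃ σ ∈ T, σ.length = n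

def IsPath (β : ℕ → Bool) (T : Set (List Bool)) : Prop :=
  ∀ n : ℕ, (List.ofFn fun i : Fin n => β i) ∈ T

theorem stmt18 (Φ : Set (List Bool) → (ℕ → Bool))
    (hΦ : ∀ T, InfTree T → IsPath (Φ T) T) :
    ∃ (T : Set (List Bool)) (Ts : ℕ → Set (List Bool)),
      InfTree T ∧ (∀ k, InfTree (Ts k)) ∧
      (∀ σ : List Bool, ∃ K, ∀ k ≥ K, (σ ∈ Ts k ↔ σ ∈ T)) ∧
      ¬(∀ n : ℕ, ∃ K, ∀ k ≥ K, Φ (Ts k) n = Φ T n) := by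
  classical
  set b : Bool := Φ Set.univ 0 with hb
  refine ⟨Set.univ, fun k => {σ | σ.length ≤ k ∨ σ.head? = some (!b)}, ?_, ?_, ?_, ?_⟩
  · exact ⟨fun σ _ τ _ => trivial, fun n => ⟨List.replicate n true, trivial, List.length_replicate⟩⟩
  · intro k
    constructor
    · intro σ hσ τ hτ
      rcases hτ with ⟨t, rfl⟩
      rcases hσ with hσ | hσ
      · exact Or.inl (le_trans (by simpa using Nat.le_add_right τ.length t.length) hσ)
      · rcases τ with _ | ⟨a, τ'⟩
        · exact Or.inl (Nat.zero_le _)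
        · simp only [List.cons_append, List.head?_cons] at hσ ⊢
          exact Or.inr hσ
    · intro n
      refine ⟨List.replicate n (!b), ?_, List.length_replicate⟩
      rcases n with _ | n
      · exact Or.inl (Nat.zero_le _)
      · exact Or.inr rfl
  · intro σ
    refine ⟨σ.length, fun k hk => ?_⟩
    simp only [Set.mem_setOf_eq, Set.mem_univ, iff_true]
    exact Or.inl hk
  · intro h
    obtain ⟨K, hK⟩ := h 0
    have hkK := hK K le_rfl
    have hinf : InfTree {σ : List Bool | σ.length ≤ K ∨ σ.head? = some (!b)} := by
      constructor
      · intro σ hσ τ hτ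
        rcases hτ with ⟨t, rfl⟩
        rcases hσ with hσ | hσ
        · exact Or.inl (le_trans (by simpa using Nat.le_add_right τ.length t.length) hσ)
        · rcases τ with _ | ⟨a, τ'⟩
          · exact Or.inl (Nat.zero_le _)
          · simp only [List.cons_append, List.head?_cons] at hσ ⊢
            exact Or.inr hσ
      · intro n
        refine ⟨List.replicate n (!b), ?_, List.length_replicate⟩
        rcases n with _ | n
        · exact Or.inl (Nat.zero_le _)
        · exact Or.inr rfl
    have hp := hΦ _ hinf (K + 1)
    rw [List.ofFn_succ] at hp
    rcases hp with hp | hp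
    · simp at hp
    · simp only [List.head?_cons, Option.some.injEq, Fin.val_zero] at hp
      simp only at hkK
      have : b = !b := hb.trans (hkK.symm.trans hp)
      simp at this
end
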